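/- Let V be an ℝ-linear subspace of ℝⁿ and V^⊥ its orthogonal complement. Set L₀ := {(v, w) : v ∈ V, w ∈ V^⊥} ⊆ ℝⁿ ⊕ ℝⁿ (this is V ⊕ √−1·V^⊥ under the identification (x,y) ↦ x + √−1 y with ℂⁿ). If L is a Lagrangian subspace of ℝⁿ ⊕ ℝⁿ with L ∩ L₀ = V × {0}, then there exists a symmetric linear operator S : V^⊥ → V^⊥ (i.e. ⟪S w, w'⟫ = ⟪w, S w'⟫ for all w, w' ∈ V^⊥) such that L = {(v + w, S w) : v ∈ V, w ∈ V^⊥}. -/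

import Mathlib

/-- Lemma 2.2 of the paper.
ℝⁿ ⊕ ℝⁿ carries the standard symplectic form
ω₀((x,y),(x',y')) = ⟪x,y'⟫ − ⟪y,x'⟫.  If `L` is a Lagrangian subspace
(i.e. `finrank L = n` and ω₀ vanishes on `L`) with `L ∩ (V × Vᗮ) = V × {0}`,
then `L = {(v + w, S w) : v ∈ V, w ∈ Vᗮ}` for some symmetric operator
`S : Vᗮ → Vᗮ`. -/
theorem conormal_clean_intersection_graph
    (n : ℕ) (V : Submodule ℝ (EuclideanSpace ℝ (Fin n)))
    (L : Submodule ℝ (EuclideanSpace ℝ (Fin n) × EuclideanSpace ℝ (Fin n)))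
    (hdim : Module.finrank ℝ L = n)
    (hiso : ∀ z ∈ L, ∀ z' ∈ L,
      (inner ℝ z.1 z'.2 : ℝ) - (inner ℝ z.2 z'.1 : ℝ) = 0)
    (hint : L ⊓ V.prod Vᗮ = V.prod ⊥) :
    ∃ S : Vᗮ →ₗ[ℝ] Vᗮ,
      (∀ w w' : Vᗮ,
        (inner ℝ ((S w : Vᗮ) : EuclideanSpace ℝ (Fin n)) ((w' : Vᗮ) : EuclideanSpace ℝ (Fin n)) : ℝ)
          = (inner ℝ ((w : Vᗮ) : EuclideanSpace ℝ (Fin n)) ((S w' : Vᗮ) : EuclideanSpace ℝ (Fin n)) : ℝ)) ∧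
      (∀ z : EuclideanSpace ℝ (Fin n) × EuclideanSpace ℝ (Fin n),
        z ∈ L ↔ ∃ (v : V) (w : Vᗮ),
          z = ((v : EuclideanSpace ℝ (Fin n)) + (w : EuclideanSpace ℝ (Fin n)),
               ((S w : Vᗮ) : EuclideanSpace ℝ (Fin n)))) := by
  classical
  set K := EuclideanSpace ℝ (Fin n)
  -- V × 0 ⊆ L
  have hVL : V.prod (⊥ : Submodule ℝ K) ≤ L := by
    rw [← hint]; exact inf_le_left
  have hVmem : ∀ v ∈ V, ((v, 0) : K × K) ∈ L := fun v hv =>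
    hVL (Submodule.mem_prod.2 ⟨hv, Submodule.zero_mem _⟩)
  -- second component of any element of L lies in Vᗮ
  have hA : ∀ z ∈ L, z.2 ∈ Vᗮ := by
    intro z hz
    rw [Submodule.mem_orthogonal]
    intro u hu
    have := hiso ((u, 0) : K × K) (hVmem u hu) z hz
    simpa using this
  -- if z ∈ L and z.1 ∈ V then z.2 = 0
  have hB : ∀ z ∈ L, z.1 ∈ V → z.2 = 0 := by
    intro z hz h1
    have : z ∈ L ⊓ V.prod Vᗮ := ⟨hz, Submodule.mem_prod.2 ⟨h1, hA z hz⟩⟩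
    rw [hint] at this
    simpa using (Submodule.mem_prod.1 this).2
  -- the projection map p : L → Vᗮ
  let p : L →ₗ[ℝ] Vᗮ :=
    (Submodule.orthogonalProjectionOnto Vᗮ).toLinearMap ∘ₗ (LinearMap.fst ℝ K K) ∘ₗ L.subtype
  have hVorth : ∀ x ∈ V, Submodule.orthogonalProjectionOnto Vᗮ x = 0 := by
    intro x hx
    rw [Submodule.orthogonalProjectionOnto_eq_zero_iff, Submodule.orthogonal_orthogonal]
    exact hx
  have hker : ∀ z : L, p z = 0 ↔ (z : K × K).1 ∈ V := by
    intro z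
    constructor
    · intro h
      have : (z : K × K).1 ∈ Vᗮᗮ := Submodule.orthogonalProjectionOnto_eq_zero_iff.1 h
      rwa [Submodule.orthogonal_orthogonal] at this
    · intro h
      exact hVorth _ h
  -- kernel of p is equivalent to V
  let j : V →ₗ[ℝ] ↥(LinearMap.ker p) :=
    { toFun := fun v => ⟨⟨(v, 0), hVmem v v.2⟩, by
        rw [LinearMap.mem_ker, hker]; exact v.2⟩
      map_add' := by intro a b; ext <;> simp
      map_smul' := by intro a b; ext <;> simp }
  have hj : Function.Bijective j := by
    constructor
    · intro a b hab
      have : ((j a : L) : K × K).1 = ((j b : L) : K × K).1 := by rw [hab]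
      exact Subtype.ext this
    · rintro ⟨⟨z, hzL⟩, hzk⟩
      have h1 : z.1 ∈ V := (hker ⟨z, hzL⟩).1 hzk
      have h2 : z.2 = 0 := hB z hzL h1
      refine ⟨⟨z.1, h1⟩, ?_⟩
      ext <;> simp [j, h2.symm]
  have hkerdim : Module.finrank ℝ (LinearMap.ker p) = Module.finrank ℝ V :=
    (LinearEquiv.ofBijective j hj).finrank_eq.symm
  -- p is surjective
  have hsurj : LinearMap.range p = ⊤ := by
    apply Submodule.eq_top_of_finrank_eq
    have hrn := LinearMap.finrank_range_add_finrank_ker p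
    have hVV : Module.finrank ℝ V + Module.finrank ℝ Vᗮ = n := by
      simpa using Submodule.finrank_add_finrank_orthogonal V
    omega
  obtain ⟨σ, hσ⟩ := p.exists_rightInverse_of_surjective hsurj
  have hσ' : ∀ w : Vᗮ, p (σ w) = w := fun w => by simpa using LinearMap.congr_fun hσ w
  -- the map T : L → Vᗮ, z ↦ z.2
  let T : L →ₗ[ℝ] Vᗮ :=
    { toFun := fun z => ⟨(z : K × K).2, hA z z.2⟩
      map_add' := by intro a b; ext; simp
      map_smul' := by intro a b; ext; simp }
  let S : Vᗮ →ₗ[ℝ] Vᗮ := T ∘ₗ σ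
  -- key: for z ∈ L, S (p z) = T z
  have hST : ∀ z : L, S (p z) = T z := by
    intro z
    have hd : p (σ (p z) - z) = 0 := by rw [map_sub, hσ']; simp
    have h1 : ((σ (p z) - z : L) : K × K).1 ∈ V := (hker _).1 hd
    have h2 : ((σ (p z) - z : L) : K × K).2 = 0 := hB _ (σ (p z) - z).2 h1
    have : T (σ (p z) - z) = 0 := by
      apply Subtype.ext; simpa [T] using h2
    rw [map_sub, sub_eq_zero] at this
    exact this
  -- membership characterization
  have hmem : ∀ z : K × K, z ∈ L ↔ ∃ (v : V) (w : Vᗮ),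
      z = ((v : K) + (w : K), ((S w : Vᗮ) : K)) := by
    intro z
    constructor
    · intro hz
      set w : Vᗮ := p ⟨z, hz⟩ with hw
      have hv : z.1 - (w : K) ∈ V := by
        have := Submodule.sub_starProjection_mem_orthogonal (K := Vᗮ) z.1
        rwa [Submodule.starProjection_apply, Submodule.orthogonal_orthogonal] at this
      refine ⟨⟨z.1 - (w : K), hv⟩, w, ?_⟩
      have hS : (S w : K) = z.2 := by
        have := hST ⟨z, hz⟩
        rw [← hw] at this
        exact congrArg Subtype.val this
      ext1
      · simp
      · exact hS.symm
    · rintro ⟨v, w, rfl⟩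
      have hu : (σ w : K × K) ∈ L := (σ w).2
      have hu2 : (σ w : K × K).2 = (S w : K) := by
        have : T (σ w) = S w := rfl
        exact (congrArg Subtype.val this).symm ▸ rfl
      have hpw : Submodule.orthogonalProjectionOnto Vᗮ (σ w : K × K).1 = w := hσ' w
      have hv' : (v : K) + (w : K) - (σ w : K × K).1 ∈ V := by
        have h1 : (σ w : K × K).1 - (w : K) ∈ Vᗮᗮ := by
          have := Submodule.sub_starProjection_mem_orthogonal (K := Vᗮ) (σ w : K × K).1
          rwa [Submodule.starProjection_apply, hpw] at this
        rw [Submodule.orthogonal_orthogonal] at h1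
        have : (v : K) + (w : K) - (σ w : K × K).1 = (v : K) - ((σ w : K × K).1 - (w : K)) := by
          abel
        rw [this]
        exact V.sub_mem v.2 h1
      have hmem1 : (((v : K) + (w : K) - (σ w : K × K).1, (0 : K)) : K × K) ∈ L :=
        hVmem _ hv'
      have := L.add_mem hmem1 hu
      have heq : (((v : K) + (w : K) - (σ w : K × K).1, (0 : K)) : K × K) + (σ w : K × K)
          = ((v : K) + (w : K), (S w : K)) := by
        ext1
        · simp
        · simp [hu2]
      rwa [heq] at this
  refine ⟨S, ?_, hmem⟩
  intro w w'
  have h1 : (((w : K), (S w : K)) : K × K) ∈ L := by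
    rw [hmem]; exact ⟨0, w, by simp⟩
  have h2 : (((w' : K), (S w' : K)) : K × K) ∈ L := by
    rw [hmem]; exact ⟨0, w', by simp⟩
  have := hiso _ h1 _ h2
  simp only at this
  have hsub : (inner ℝ (w : K) (S w' : K) : ℝ) = (inner ℝ (S w : K) (w' : K) : ℝ) := by
    linarith [this]
  rw [hsub.symm, real_inner_comm]
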